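/- Let D be a Eulerian directed graph on n vertices with all degrees positive. For every 0 ≤ α ≤ 1, σ_α² ≤ α² + 2α(1−α)(1−λ_1) + (1−α)²σ_0², where λ_1 is the first non-trivial eigenvalue of the Laplacian of D. -/

import Mathlib

open Matrix Polynomial

noncomputable section

/-- The (out-)degree of a vertex in a directed graph with adjacency matrix `A`. -/
def ddeg {V : Type*} [Fintype V] (A : Matrix V V ℝ) (x : V) : ℝ := ∑ y, A x y

/-- The diagonal matrix `T^{-1/2}` of a directed graph. -/
def dInvSqrtT {V : Type*} [Fintype V] [DecidableEq V] (A : Matrix V V ℝ) : Matrix V V ℝ :=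
  Matrix.diagonal fun x => (Real.sqrt (ddeg A x))⁻¹

/-- The non-symmetric Laplacian `vecL = I - T^{-1/2} A T^{-1/2}` of a directed graph. -/
def dvecL {V : Type*} [Fintype V] [DecidableEq V] (A : Matrix V V ℝ) : Matrix V V ℝ :=
  1 - dInvSqrtT A * A * dInvSqrtT A

/-- The Laplacian `(vecL + vecLᵀ)/2` of a directed graph. -/
def dLap {V : Type*} [Fintype V] [DecidableEq V] (A : Matrix V V ℝ) : Matrix V V ℝ :=
  (1 / 2 : ℝ) • (dvecL A + (dvecL A)ᵀ)

/-- The matrix `L_α = I - (1-α) vecL = T^{1/2} P_α T^{-1/2}`. -/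
def dLalpha {V : Type*} [Fintype V] [DecidableEq V] (A : Matrix V V ℝ) (α : ℝ) :
    Matrix V V ℝ :=
  1 - (1 - α) • dvecL A

/-- The transition matrix `P_α = α I + (1-α) T⁻¹ A` of the α-lazy random walk. -/
def dTrans {V : Type*} [Fintype V] [DecidableEq V] (A : Matrix V V ℝ) (α : ℝ) :
    Matrix V V ℝ :=
  α • (1 : Matrix V V ℝ) + (1 - α) • ((Matrix.diagonal fun x => (ddeg A x)⁻¹) * A)

/-- The volume of a set of vertices of a directed graph. -/
def dvol {V : Type*} [Fintype V] (A : Matrix V V ℝ) (X : Finset V) : ℝ :=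
  ∑ x ∈ X, ddeg A x

/-- The unit vector `φ₀` with `φ₀(x) = √(d_x)/√(vol D)`. -/
def dphi {V : Type*} [Fintype V] (A : Matrix V V ℝ) : V → ℝ :=
  fun x => Real.sqrt (ddeg A x) / Real.sqrt (dvol A Finset.univ)

/-- Euclidean norm of a (row or column) vector. -/
def euclNorm {m : Type*} [Fintype m] (f : m → ℝ) : ℝ := Real.sqrt (∑ x, f x ^ 2)

/-- The set of values `‖L_α f‖ / ‖f‖` over nonzero vectors `f` orthogonal to `φ₀ᵀ`;
its greatest element is the second largest singular value `σ_α` of `L_α`. -/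
def sigmaSet {V : Type*} [Fintype V] [DecidableEq V] (A : Matrix V V ℝ) (α : ℝ) : Set ℝ :=
  {r | ∃ f : V → ℝ, f ≠ 0 ∧ (∑ x, f x * dphi A x) = 0 ∧
    r = euclNorm (dLalpha A α *ᵥ f) / euclNorm f}

/-- `μ` lists the eigenvalues of the square matrix `M` (with multiplicity)
in non-decreasing order. -/
def IsEigenSeq {m : Type*} [Fintype m] [DecidableEq m] (M : Matrix m m ℝ) {n : ℕ}
    (μ : Fin n → ℝ) : Prop :=
  Monotone μ ∧ M.charpoly = ∏ i, (X - C (μ i))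



lemma my_charpoly_diagonal {R : Type*} [CommRing R] {n : Type*} [Fintype n] [DecidableEq n]
    (d : n → R) : (Matrix.diagonal d).charpoly = ∏ i, (X - C (d i)) := by
  unfold Matrix.charpoly
  have : charmatrix (Matrix.diagonal d) = Matrix.diagonal (fun i => X - C (d i)) := by
    ext i j
    by_cases h : i = j
    · subst h; simp
    · simp [h, Matrix.diagonal_apply_ne _ h]
  rw [this, Matrix.det_diagonal]

lemma my_charpoly_conj {R : Type*} [CommRing R] {n : Type*} [Fintype n] [DecidableEq n]
    (M U V : Matrix n n R) (hVU : V * U = 1) (hUV : U * V = 1) :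
    (V * M * U).charpoly = M.charpoly := by
  unfold Matrix.charpoly
  have hc : ∀ W : Matrix n n R[X], W * Matrix.scalar n (X : R[X]) = Matrix.scalar n X * W :=
    fun W => (Matrix.scalar_commute (X : R[X]) (fun r' => Commute.all X r') W).symm.eq
  have key : charmatrix (V * M * U) =
      (C : R →+* R[X]).mapMatrix V * charmatrix M * (C : R →+* R[X]).mapMatrix U := by
    unfold charmatrix
    rw [Matrix.mul_sub, Matrix.sub_mul]
    congr 1
    · rw [hc, mul_assoc, ← _root_.map_mul, hVU]
      simp
    · rw [← _root_.map_mul, ← _root_.map_mul]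
  rw [key, Matrix.det_mul, Matrix.det_mul]
  have h1 : ((C : R →+* R[X]).mapMatrix U).det * ((C : R →+* R[X]).mapMatrix V).det = 1 := by
    rw [← Matrix.det_mul, ← _root_.map_mul, hUV]
    simp
  calc ((C : R →+* R[X]).mapMatrix V).det * (charmatrix M).det * ((C : R →+* R[X]).mapMatrix U).det
      = (charmatrix M).det * (((C : R →+* R[X]).mapMatrix U).det * ((C : R →+* R[X]).mapMatrix V).det) := by ring
    _ = (charmatrix M).det := by rw [h1, mul_one]

lemma quad_lower_bound {V : Type*} [Fintype V] [DecidableEq V] {L : Matrix V V ℝ}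
    (hL : L.IsHermitian) (hPSD : ∀ g : V → ℝ, 0 ≤ g ⬝ᵥ (L *ᵥ g))
    {φ : V → ℝ} (hφ : φ ≠ 0) (hLφ : L *ᵥ φ = 0)
    {n : ℕ} {μ : Fin n → ℝ} (hmono : Monotone μ)
    (hchar : L.charpoly = ∏ i, (X - C (μ i)))
    (h1 : 1 < n)
    (f : V → ℝ) (horth : f ⬝ᵥ φ = 0) :
    μ ⟨1, h1⟩ * (f ⬝ᵥ f) ≤ f ⬝ᵥ (L *ᵥ f) := by
  set μ1 := μ ⟨1, h1⟩ with hμ1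
  set U : Matrix V V ℝ := (hL.eigenvectorUnitary : Matrix V V ℝ) with hU
  set S : Matrix V V ℝ := star (hL.eigenvectorUnitary : Matrix V V ℝ) with hS
  set ν : V → ℝ := hL.eigenvalues with hν
  have hSU : S * U = 1 := Unitary.coe_star_mul_self _
  have hUS : U * S = 1 := Unitary.coe_mul_star_self _
  have hdiag : S * L * U = diagonal ν := by
    have := hL.conjStarAlgAut_star_eigenvectorUnitary
    rw [Unitary.conjStarAlgAut_star_apply] at this
    exact this
  have hspec : L = U * diagonal ν * S := by
    have := hL.spectral_theorem
    rw [Unitary.conjStarAlgAut_apply] at this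
    exact this
  -- dot products are preserved by U
  have hST : S = Uᵀ := by
    rw [hS, Matrix.star_eq_conjTranspose, Matrix.conjTranspose_eq_transpose_of_trivial]
  have hSU' : Uᵀ * U = 1 := by rw [← hST]; exact hSU
  have hdot : ∀ x y : V → ℝ, (U *ᵥ x) ⬝ᵥ (U *ᵥ y) = x ⬝ᵥ y := by
    intro x y
    calc (U *ᵥ x) ⬝ᵥ (U *ᵥ y) = (U *ᵥ y) ⬝ᵥ (U *ᵥ x) := dotProduct_comm _ _
      _ = ((U *ᵥ y) ᵥ* U) ⬝ᵥ x := dotProduct_mulVec _ _ _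
      _ = (Uᵀ *ᵥ (U *ᵥ y)) ⬝ᵥ x := by rw [mulVec_transpose]
      _ = ((Uᵀ * U) *ᵥ y) ⬝ᵥ x := by rw [mulVec_mulVec]
      _ = x ⬝ᵥ y := by rw [hSU', one_mulVec, dotProduct_comm]
  set c : V → ℝ := S *ᵥ f with hc
  set b : V → ℝ := S *ᵥ φ with hb
  have hfc : U *ᵥ c = f := by rw [hc, mulVec_mulVec, hUS, one_mulVec]
  have hφb : U *ᵥ b = φ := by rw [hb, mulVec_mulVec, hUS, one_mulVec]
  have hdb : ∀ i, ν i * b i = 0 := by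
    intro i
    have : diagonal ν *ᵥ b = 0 := by
      rw [← hdiag, ← mulVec_mulVec, hφb, ← mulVec_mulVec, hLφ, mulVec_zero]
    have := congrFun this i
    simpa [mulVec_diagonal] using this
  have hbne : b ≠ 0 := by
    intro h
    apply hφ
    rw [← hφb, h, mulVec_zero]
  have hff : f ⬝ᵥ f = c ⬝ᵥ c := by rw [← hfc, hdot]
  have hforth : c ⬝ᵥ b = 0 := by rw [← hfc, ← hφb, hdot] at horth; exact horth
  have hquad : f ⬝ᵥ (L *ᵥ f) = ∑ i, c i * (ν i * c i) := by
    have : L *ᵥ f = U *ᵥ (diagonal ν *ᵥ c) := by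
      rw [hspec, ← mulVec_mulVec, ← mulVec_mulVec]
    rw [this, ← hfc, hdot]
    simp [dotProduct, mulVec_diagonal]
  have hν0 : ∀ i, 0 ≤ ν i := by
    intro i
    have hbasis : U *ᵥ Pi.single i 1 = ⇑(hL.eigenvectorBasis i) :=
      hL.eigenvectorUnitary_mulVec i
    have hgg : (U *ᵥ Pi.single i 1) ⬝ᵥ (U *ᵥ Pi.single i 1) = 1 := by
      rw [hdot]
      simp [dotProduct, Pi.single_apply]
    have hpsd := hPSD (U *ᵥ Pi.single i 1)
    rw [hbasis] at hgg
    rw [hbasis, hL.mulVec_eigenvectorBasis] at hpsd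
    rw [dotProduct_smul, hgg] at hpsd
    simpa using hpsd
  -- multiset of eigenvalues
  have hms : Multiset.map ν Finset.univ.val = Multiset.map μ Finset.univ.val := by
    have hc2 : L.charpoly = ∏ i : V, (X - C (ν i)) := by
      rw [hspec, my_charpoly_conj (diagonal ν) S U hUS hSU, my_charpoly_diagonal]
    have heq : (∏ i : V, (X - C (ν i))) = ∏ i : Fin n, (X - C (μ i)) := by
      rw [← hc2, hchar]
    have h3 : (Multiset.map (fun a : ℝ => X - C a) (Multiset.map ν Finset.univ.val)).prod
        = (Multiset.map (fun a : ℝ => X - C a) (Multiset.map μ Finset.univ.val)).prod := by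
      rw [Multiset.map_map, Multiset.map_map]
      rw [Finset.prod_eq_multiset_prod, Finset.prod_eq_multiset_prod] at heq
      exact heq
    have := congrArg Polynomial.roots h3
    rwa [Polynomial.roots_multiset_prod_X_sub_C, Polynomial.roots_multiset_prod_X_sub_C] at this
  have hcard : (Finset.univ.filter (fun i : V => ν i < μ1)).card ≤ 1 := by
    have h4 : ((Finset.univ.filter (fun i : V => ν i < μ1)).card : ℕ)
        = Multiset.card (Multiset.filter (fun a : ℝ => a < μ1) (Multiset.map ν Finset.univ.val)) := by
      rw [Multiset.filter_map, Multiset.card_map]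
      rfl
    have h5 : Multiset.card (Multiset.filter (fun a : ℝ => a < μ1) (Multiset.map μ Finset.univ.val))
        = (Finset.univ.filter (fun j : Fin n => μ j < μ1)).card := by
      rw [Multiset.filter_map, Multiset.card_map]
      rfl
    rw [h4, hms, h5]
    apply Finset.card_le_one.mpr
    intro a ha b hb
    have ha' : μ a < μ1 := (Finset.mem_filter.mp ha).2
    have hb' : μ b < μ1 := (Finset.mem_filter.mp hb).2
    have ha0 : (a : ℕ) = 0 := by
      by_contra h
      refine absurd (hmono (show (⟨1, h1⟩ : Fin n) ≤ a from ?_)) (not_le.mpr ha')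
      rw [Fin.le_def]
      simpa using Nat.one_le_iff_ne_zero.mpr h
    have hb0 : (b : ℕ) = 0 := by
      by_contra h
      refine absurd (hmono (show (⟨1, h1⟩ : Fin n) ≤ b from ?_)) (not_le.mpr hb')
      rw [Fin.le_def]
      simpa using Nat.one_le_iff_ne_zero.mpr h
    exact Fin.ext (ha0.trans hb0.symm)
  rw [hff, hquad]
  by_cases hcase : μ1 ≤ 0
  · have h6 : 0 ≤ ∑ i, c i * (ν i * c i) := by
      apply Finset.sum_nonneg
      intro i _
      have : c i * (ν i * c i) = ν i * (c i * c i) := by ring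
      rw [this]
      exact mul_nonneg (hν0 i) (mul_self_nonneg _)
    have h7 : μ1 * (c ⬝ᵥ c) ≤ 0 := by
      apply mul_nonpos_of_nonpos_of_nonneg hcase
      exact Finset.sum_nonneg fun i _ => mul_self_nonneg _
    linarith
  · push_neg at hcase
    obtain ⟨k, hk⟩ := Function.ne_iff.mp hbne
    have hνk : ν k = 0 := by
      rcases mul_eq_zero.mp (hdb k) with h | h
      · exact h
      · exact absurd h hk
    have hge : ∀ i, i ≠ k → μ1 ≤ ν i := by
      intro i hik
      by_contra h
      push_neg at h
      have hi : i ∈ Finset.univ.filter (fun i : V => ν i < μ1) := by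
        simp [h]
      have hkmem : k ∈ Finset.univ.filter (fun i : V => ν i < μ1) := by
        simp [hνk, hcase]
      exact hik (Finset.card_le_one.mp hcard i hi k hkmem)
    have hbi : ∀ i, i ≠ k → b i = 0 := by
      intro i hik
      rcases mul_eq_zero.mp (hdb i) with h | h
      · exact absurd h (by linarith [hge i hik])
      · exact h
    have hck : c k = 0 := by
      have : c ⬝ᵥ b = c k * b k := by
        rw [dotProduct]
        apply Finset.sum_eq_single
        · intro i _ hik
          rw [hbi i hik, mul_zero]
        · intro h
          exact absurd (Finset.mem_univ k) h
      rw [hforth] at this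
      rcases mul_eq_zero.mp this.symm with h | h
      · exact h
      · exact absurd h hk
    rw [dotProduct, Finset.mul_sum]
    apply Finset.sum_le_sum
    intro i _
    by_cases hik : i = k
    · subst hik
      rw [hck]
      ring_nf
      exact le_refl _
    · have := hge i hik
      have h8 : μ1 * (c i * c i) ≤ ν i * (c i * c i) :=
        mul_le_mul_of_nonneg_right this (mul_self_nonneg _)
      calc μ1 * (c i * c i) ≤ ν i * (c i * c i) := h8
        _ = c i * (ν i * c i) := by ring

section GraphLemmas
variable {V : Type*} [Fintype V] [DecidableEq V] (A : Matrix V V ℝ)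

lemma M0_apply (x y : V) :
    (dInvSqrtT A * A * dInvSqrtT A) x y
      = (Real.sqrt (ddeg A x))⁻¹ * A x y * (Real.sqrt (ddeg A y))⁻¹ := by
  rw [dInvSqrtT, Matrix.mul_diagonal, Matrix.diagonal_mul]

end GraphLemmas

section GraphLemmas2
variable {V : Type*} [Fintype V] [DecidableEq V] (A : Matrix V V ℝ)

lemma ddeg_mul_inv_sqrt (hdegpos : ∀ x, 0 < ddeg A x) (x : V) :
    (Real.sqrt (ddeg A x))⁻¹ * ddeg A x = Real.sqrt (ddeg A x) := by
  have hs : Real.sqrt (ddeg A x) * Real.sqrt (ddeg A x) = ddeg A x :=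
    Real.mul_self_sqrt (le_of_lt (hdegpos x))
  have hne : Real.sqrt (ddeg A x) ≠ 0 := ne_of_gt (Real.sqrt_pos.mpr (hdegpos x))
  field_simp
  rw [sq, hs]

lemma M0_mulVec_phi (hdegpos : ∀ x, 0 < ddeg A x) :
    (dInvSqrtT A * A * dInvSqrtT A) *ᵥ dphi A = dphi A := by
  funext x
  have hterm : ∀ y, (dInvSqrtT A * A * dInvSqrtT A) x y * dphi A y
      = ((Real.sqrt (ddeg A x))⁻¹ / Real.sqrt (dvol A Finset.univ)) * A x y := by
    intro y
    rw [M0_apply, dphi]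
    have hne : Real.sqrt (ddeg A y) ≠ 0 := ne_of_gt (Real.sqrt_pos.mpr (hdegpos y))
    rw [show (Real.sqrt (ddeg A x))⁻¹ * A x y * (Real.sqrt (ddeg A y))⁻¹
        * (Real.sqrt (ddeg A y) / Real.sqrt (dvol A Finset.univ))
        = ((Real.sqrt (ddeg A y))⁻¹ * Real.sqrt (ddeg A y))
          * ((Real.sqrt (ddeg A x))⁻¹ / Real.sqrt (dvol A Finset.univ) * A x y) from by ring,
      inv_mul_cancel₀ hne, one_mul]
  rw [Matrix.mulVec, dotProduct]
  simp only [hterm]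
  rw [← Finset.mul_sum]
  show (Real.sqrt (ddeg A x))⁻¹ / Real.sqrt (dvol A Finset.univ) * ddeg A x = dphi A x
  rw [dphi, show (Real.sqrt (ddeg A x))⁻¹ / Real.sqrt (dvol A Finset.univ) * ddeg A x
      = ((Real.sqrt (ddeg A x))⁻¹ * ddeg A x) / Real.sqrt (dvol A Finset.univ) from by ring,
    ddeg_mul_inv_sqrt A hdegpos]

lemma M0T_mulVec_phi (hEuler : ∀ x, (∑ y, A x y) = ∑ y, A y x)
    (hdegpos : ∀ x, 0 < ddeg A x) :
    (dInvSqrtT A * A * dInvSqrtT A)ᵀ *ᵥ dphi A = dphi A := by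
  funext x
  have hterm : ∀ y, (dInvSqrtT A * A * dInvSqrtT A)ᵀ x y * dphi A y
      = ((Real.sqrt (ddeg A x))⁻¹ / Real.sqrt (dvol A Finset.univ)) * A y x := by
    intro y
    rw [Matrix.transpose_apply, M0_apply, dphi]
    have hne : Real.sqrt (ddeg A y) ≠ 0 := ne_of_gt (Real.sqrt_pos.mpr (hdegpos y))
    rw [show (Real.sqrt (ddeg A y))⁻¹ * A y x * (Real.sqrt (ddeg A x))⁻¹
        * (Real.sqrt (ddeg A y) / Real.sqrt (dvol A Finset.univ))
        = ((Real.sqrt (ddeg A y))⁻¹ * Real.sqrt (ddeg A y))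
          * ((Real.sqrt (ddeg A x))⁻¹ / Real.sqrt (dvol A Finset.univ) * A y x) from by ring,
      inv_mul_cancel₀ hne, one_mul]
  rw [Matrix.mulVec, dotProduct]
  simp only [hterm]
  rw [← Finset.mul_sum, ← hEuler x]
  show (Real.sqrt (ddeg A x))⁻¹ / Real.sqrt (dvol A Finset.univ) * ddeg A x = dphi A x
  rw [dphi, show (Real.sqrt (ddeg A x))⁻¹ / Real.sqrt (dvol A Finset.univ) * ddeg A x
      = ((Real.sqrt (ddeg A x))⁻¹ * ddeg A x) / Real.sqrt (dvol A Finset.univ) from by ring,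
    ddeg_mul_inv_sqrt A hdegpos]

lemma dLap_mulVec_phi (hEuler : ∀ x, (∑ y, A x y) = ∑ y, A y x)
    (hdegpos : ∀ x, 0 < ddeg A x) : dLap A *ᵥ dphi A = 0 := by
  rw [dLap, smul_mulVec, add_mulVec, dvecL, transpose_sub, transpose_one,
    sub_mulVec, sub_mulVec, one_mulVec,
    M0_mulVec_phi A hdegpos, M0T_mulVec_phi A hEuler hdegpos]
  simp

lemma dLap_isHermitian : (dLap A).IsHermitian := by
  show (dLap A)ᴴ = dLap A
  rw [Matrix.conjTranspose_eq_transpose_of_trivial, dLap, Matrix.transpose_smul,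
    Matrix.transpose_add, Matrix.transpose_transpose, add_comm]

lemma dLap_quad (g : V → ℝ) :
    g ⬝ᵥ (dLap A *ᵥ g) = (∑ x, g x * g x)
      - ∑ x, ∑ y, A x y * (((Real.sqrt (ddeg A x))⁻¹ * g x) * ((Real.sqrt (ddeg A y))⁻¹ * g y)) := by
  have e1 : g ⬝ᵥ (dLap A *ᵥ g)
      = (1/2 : ℝ) * (g ⬝ᵥ (dvecL A *ᵥ g) + g ⬝ᵥ ((dvecL A)ᵀ *ᵥ g)) := by
    rw [dLap, smul_mulVec, add_mulVec, dotProduct_smul]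
    rw [dotProduct_add]
    simp [smul_eq_mul]
  have e2 : g ⬝ᵥ (dvecL A *ᵥ g)
      = g ⬝ᵥ g - g ⬝ᵥ ((dInvSqrtT A * A * dInvSqrtT A) *ᵥ g) := by
    rw [dvecL, sub_mulVec, one_mulVec, dotProduct_sub]
  have e3 : g ⬝ᵥ ((dvecL A)ᵀ *ᵥ g)
      = g ⬝ᵥ g - g ⬝ᵥ ((dInvSqrtT A * A * dInvSqrtT A)ᵀ *ᵥ g) := by
    rw [dvecL, transpose_sub, transpose_one, sub_mulVec, one_mulVec, dotProduct_sub]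
  have e4 : g ⬝ᵥ ((dInvSqrtT A * A * dInvSqrtT A) *ᵥ g)
      = ∑ x, ∑ y, A x y * (((Real.sqrt (ddeg A x))⁻¹ * g x) * ((Real.sqrt (ddeg A y))⁻¹ * g y)) := by
    simp only [dotProduct, Matrix.mulVec, Finset.mul_sum, M0_apply]
    exact Finset.sum_congr rfl fun x _ => Finset.sum_congr rfl fun y _ => by ring
  have e5 : g ⬝ᵥ ((dInvSqrtT A * A * dInvSqrtT A)ᵀ *ᵥ g)
      = ∑ x, ∑ y, A x y * (((Real.sqrt (ddeg A x))⁻¹ * g x) * ((Real.sqrt (ddeg A y))⁻¹ * g y)) := by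
    simp only [dotProduct, Matrix.mulVec, Finset.mul_sum, Matrix.transpose_apply, M0_apply]
    rw [Finset.sum_comm]
    exact Finset.sum_congr rfl fun x _ => Finset.sum_congr rfl fun y _ => by ring
  rw [e1, e2, e3, e4, e5, dotProduct]
  ring

lemma dLap_psd (h01 : ∀ x y, A x y = 0 ∨ A x y = 1)
    (hEuler : ∀ x, (∑ y, A x y) = ∑ y, A y x)
    (hdegpos : ∀ x, 0 < ddeg A x)
    (g : V → ℝ) : 0 ≤ g ⬝ᵥ (dLap A *ᵥ g) := by
  set h : V → ℝ := fun x => (Real.sqrt (ddeg A x))⁻¹ * g x with hh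
  have hA0 : ∀ x y, 0 ≤ A x y := by
    intro x y
    rcases h01 x y with h | h <;> rw [h] <;> norm_num
  have hdx : ∀ x, ddeg A x * h x ^ 2 = g x * g x := by
    intro x
    have hs : Real.sqrt (ddeg A x) * Real.sqrt (ddeg A x) = ddeg A x :=
      Real.mul_self_sqrt (le_of_lt (hdegpos x))
    have hne : Real.sqrt (ddeg A x) ≠ 0 := ne_of_gt (Real.sqrt_pos.mpr (hdegpos x))
    rw [hh]
    field_simp
    nlinarith [hs]
  have step1 : ∑ x, ∑ y, A x y * (h x * h y)
      ≤ ∑ x, ∑ y, (A x y * h x ^ 2 + A x y * h y ^ 2) / 2 := by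
    refine Finset.sum_le_sum fun x _ => Finset.sum_le_sum fun y _ => ?_
    nlinarith [mul_nonneg (hA0 x y) (sq_nonneg (h x - h y))]
  have hS1 : ∑ x, ∑ y, A x y * h x ^ 2 = ∑ x, g x * g x := by
    refine Finset.sum_congr rfl fun x _ => ?_
    rw [← Finset.sum_mul]
    show ddeg A x * h x ^ 2 = g x * g x
    exact hdx x
  have hS2 : ∑ x : V, ∑ y : V, A x y * h y ^ 2 = ∑ x, g x * g x := by
    rw [Finset.sum_comm]
    refine Finset.sum_congr rfl fun y _ => ?_
    rw [← Finset.sum_mul, ← hEuler y]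
    show ddeg A y * h y ^ 2 = g y * g y
    exact hdx y
  have hsplit : ∑ x : V, ∑ y : V, (A x y * h x ^ 2 + A x y * h y ^ 2) / 2
      = ∑ x, g x * g x := by
    have : ∀ x : V, ∑ y : V, (A x y * h x ^ 2 + A x y * h y ^ 2) / 2
        = ((∑ y, A x y * h x ^ 2) + ∑ y, A x y * h y ^ 2) / 2 := by
      intro x
      rw [← Finset.sum_add_distrib, ← Finset.sum_div]
    rw [Finset.sum_congr rfl fun x _ => this x, ← Finset.sum_div, Finset.sum_add_distrib,
      hS1, hS2]
    ring
  rw [dLap_quad]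
  have : ∑ x, ∑ y, A x y * (h x * h y) ≤ ∑ x, g x * g x := by
    rw [← hsplit]; exact step1
  linarith

end GraphLemmas2

section NormLemmas
variable {m : Type*} [Fintype m]

lemma euclNorm_nonneg (f : m → ℝ) : 0 ≤ euclNorm f := Real.sqrt_nonneg _

lemma euclNorm_sq_eq_dot (f : m → ℝ) : euclNorm f ^ 2 = f ⬝ᵥ f := by
  rw [euclNorm, Real.sq_sqrt (Finset.sum_nonneg fun i _ => sq_nonneg _), dotProduct]
  exact Finset.sum_congr rfl fun x _ => pow_two (f x)

lemma euclNorm_pos (f : m → ℝ) (hf : f ≠ 0) : 0 < euclNorm f := by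
  obtain ⟨x, hx⟩ := Function.ne_iff.mp hf
  exact Real.sqrt_pos.mpr (Finset.sum_pos' (fun i _ => sq_nonneg _)
    ⟨x, Finset.mem_univ x, pow_pos (abs_pos.mpr hx) 2 |>.trans_le (by rw [sq_abs])⟩)

end NormLemmas

lemma dphi_ne_zero {V : Type*} [Fintype V] [Nonempty V] (A : Matrix V V ℝ)
    (hdegpos : ∀ x, 0 < ddeg A x) : dphi A ≠ 0 := by
  intro h
  have x := Classical.arbitrary V
  have hvol : 0 < dvol A Finset.univ :=
    Finset.sum_pos (fun x _ => hdegpos x) Finset.univ_nonempty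
  have h0 : dphi A x = 0 := congrFun h x
  rw [dphi] at h0
  have hpos : 0 < Real.sqrt (ddeg A x) / Real.sqrt (dvol A Finset.univ) :=
    div_pos (Real.sqrt_pos.mpr (hdegpos x)) (Real.sqrt_pos.mpr hvol)
  linarith


/-- `σ_α² ≤ α² + 2α(1-α)(1-λ₁) + (1-α)²σ₀²` for a Eulerian
directed graph. -/
theorem stmt_5 {V : Type*} [Fintype V] [DecidableEq V]
    (A : Matrix V V ℝ)
    (h01 : ∀ x y, A x y = 0 ∨ A x y = 1)
    (hEuler : ∀ x, (∑ y, A x y) = ∑ y, A y x)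
    (hdegpos : ∀ x, 0 < ddeg A x)
    (n : ℕ) (hn : Fintype.card V = n) (hn2 : 2 ≤ n)
    (μ : Fin n → ℝ) (hμ : IsEigenSeq (dLap A) μ)
    (α : ℝ) (hα0 : 0 ≤ α) (hα1 : α ≤ 1)
    (σ₀ : ℝ) (hσ₀ : IsGreatest (sigmaSet A 0) σ₀)
    (σα : ℝ) (hσα : IsGreatest (sigmaSet A α) σα) :
    σα ^ 2 ≤ α ^ 2 + 2 * α * (1 - α) * (1 - μ ⟨1, by omega⟩) + (1 - α) ^ 2 * σ₀ ^ 2 := by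
  classical
  obtain ⟨f, hf0, hforthsum, hσαeq⟩ := hσα.1
  have hNonempty : Nonempty V := by
    rw [← Fintype.card_pos_iff]; omega
  have hφne : dphi A ≠ 0 := dphi_ne_zero A hdegpos
  have horth : f ⬝ᵥ dphi A = 0 := hforthsum
  -- the quadratic form lower bound
  have hQ : μ ⟨1, by omega⟩ * (f ⬝ᵥ f) ≤ f ⬝ᵥ (dLap A *ᵥ f) :=
    quad_lower_bound (dLap_isHermitian A) (dLap_psd A h01 hEuler hdegpos) hφne
      (dLap_mulVec_phi A hEuler hdegpos) hμ.1 hμ.2 (by omega) f horth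
  set μ1 : ℝ := μ ⟨1, by omega⟩ with hμ1
  -- the 0-lazy walk matrix
  set M : Matrix V V ℝ := dLalpha A 0 with hM
  set g : V → ℝ := M *ᵥ f with hg
  have hM0 : M *ᵥ f = f - dvecL A *ᵥ f := by
    rw [hM, dLalpha, Matrix.sub_mulVec, Matrix.one_mulVec, Matrix.smul_mulVec]
    norm_num
  have hMα : dLalpha A α *ᵥ f = α • f + (1 - α) • g := by
    rw [dLalpha, Matrix.sub_mulVec, Matrix.one_mulVec, Matrix.smul_mulVec, hg, hM0]
    module
  -- cross term
  have htr : f ⬝ᵥ ((dvecL A)ᵀ *ᵥ f) = f ⬝ᵥ (dvecL A *ᵥ f) := by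
    rw [Matrix.mulVec_transpose, dotProduct_comm, ← Matrix.dotProduct_mulVec]
  have hLf : f ⬝ᵥ (dLap A *ᵥ f) = f ⬝ᵥ (dvecL A *ᵥ f) := by
    rw [dLap, Matrix.smul_mulVec, Matrix.add_mulVec, dotProduct_smul,
      dotProduct_add, htr, smul_eq_mul]
    ring
  have hfg : f ⬝ᵥ g = f ⬝ᵥ f - f ⬝ᵥ (dLap A *ᵥ f) := by
    rw [hg, hM0, dotProduct_sub, hLf]
  -- norms
  have hNfpos : 0 < euclNorm f := euclNorm_pos f hf0
  have hNfne : euclNorm f ≠ 0 := ne_of_gt hNfpos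
  have hFpos : 0 < f ⬝ᵥ f := by
    rw [← euclNorm_sq_eq_dot]; exact pow_pos hNfpos 2
  -- σ₀ bound on g
  have hmem0 : euclNorm g / euclNorm f ∈ sigmaSet A 0 :=
    ⟨f, hf0, hforthsum, by rw [hg, hM]⟩
  have hr0 : 0 ≤ euclNorm g / euclNorm f :=
    div_nonneg (euclNorm_nonneg g) (euclNorm_nonneg f)
  have hrσ : euclNorm g / euclNorm f ≤ σ₀ := hσ₀.2 hmem0
  have hG : g ⬝ᵥ g ≤ σ₀ ^ 2 * (f ⬝ᵥ f) := by
    have h1 : euclNorm g = (euclNorm g / euclNorm f) * euclNorm f :=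
      (div_mul_cancel₀ _ hNfne).symm
    have h2 : euclNorm g ^ 2 ≤ σ₀ ^ 2 * euclNorm f ^ 2 := by
      rw [h1, mul_pow]
      exact mul_le_mul_of_nonneg_right (pow_le_pow_left₀ hr0 hrσ 2) (sq_nonneg _)
    rwa [euclNorm_sq_eq_dot, euclNorm_sq_eq_dot] at h2
  -- expansion of the α-norm
  have hexp : euclNorm (dLalpha A α *ᵥ f) ^ 2
      = α ^ 2 * (f ⬝ᵥ f) + (2 * α * (1 - α)) * (f ⬝ᵥ g) + (1 - α) ^ 2 * (g ⬝ᵥ g) := by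
    rw [euclNorm_sq_eq_dot, hMα]
    simp only [dotProduct, Pi.add_apply, Pi.smul_apply, smul_eq_mul, Finset.mul_sum,
      ← Finset.sum_add_distrib]
    exact Finset.sum_congr rfl fun x _ => by ring
  -- σα squared
  have hσα2 : σα ^ 2 * (f ⬝ᵥ f) = euclNorm (dLalpha A α *ᵥ f) ^ 2 := by
    rw [hσαeq, div_pow, ← euclNorm_sq_eq_dot f]
    exact div_mul_cancel₀ _ (pow_ne_zero 2 hNfne)
  -- final arithmetic
  have key : σα ^ 2 * (f ⬝ᵥ f)
      ≤ (α ^ 2 + 2 * α * (1 - α) * (1 - μ1) + (1 - α) ^ 2 * σ₀ ^ 2) * (f ⬝ᵥ f) := by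
    rw [hσα2, hexp, hfg]
    nlinarith [mul_nonneg (mul_nonneg hα0 (sub_nonneg.mpr hα1))
        (sub_nonneg.mpr hQ),
      mul_nonneg (sq_nonneg (1 - α)) (sub_nonneg.mpr hG)]
  have final : σα ^ 2 ≤ α ^ 2 + 2 * α * (1 - α) * (1 - μ1) + (1 - α) ^ 2 * σ₀ ^ 2 :=
    le_of_mul_le_mul_right (by linarith [key]) hFpos
  exact final

end
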